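/- arXiv:2603.24748 — 5 statements merged into one kernel-verified Lean document; each statement's English description precedes it below -/
import Mathlib

section
/- For all weights w1, w2, w3 > 0, every step size h > 0 and every λ with 0 < λ ≤ 2, the determinant of Q(h,λ) satisfies det Q(h,λ) ≤ (w3 + w1·h⁴/4) / S(h) < 1. -/
noncomputable def Sh (w1 w2 w3 h : ℝ) : ℝ := w3 + w2 * h ^ 2 + w1 * h ^ 4 / 4

noncomputable def ah (w1 w2 w3 h : ℝ) : ℝ := w1 * h ^ 2 / (2 * Sh w1 w2 w3 h)

noncomputable def bh (w1 w2 w3 h : ℝ) : ℝ := (w2 * h + w1 * h ^ 3 / 2) / Sh w1 w2 w3 h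

noncomputable def Q (w1 w2 w3 h lam : ℝ) : Matrix (Fin 2) (Fin 2) ℝ :=
  !![1 - h ^ 2 / 2 * ah w1 w2 w3 h * lam, h - h ^ 2 / 2 * bh w1 w2 w3 h;
     -(h * ah w1 w2 w3 h * lam), 1 - h * bh w1 w2 w3 h]

theorem det_Q_lt_one (w1 w2 w3 h lam : ℝ) (hw1 : 0 < w1) (hw2 : 0 < w2) (hw3 : 0 < w3)
    (hh : 0 < h) (hlam0 : 0 < lam) (hlam2 : lam ≤ 2) :
    (Q w1 w2 w3 h lam).det ≤ (w3 + w1 * h ^ 4 / 4) / Sh w1 w2 w3 h ∧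
    (w3 + w1 * h ^ 4 / 4) / Sh w1 w2 w3 h < 1 := by
  have hS : 0 < Sh w1 w2 w3 h := by unfold Sh; positivity
  have hSne : Sh w1 w2 w3 h ≠ 0 := ne_of_gt hS
  have hdet : (Q w1 w2 w3 h lam).det
      = (w3 + (lam - 1) * (w1 * h ^ 4) / 4) / Sh w1 w2 w3 h := by
    have h2 : (2 : ℝ) * Sh w1 w2 w3 h ≠ 0 := by positivity
    simp only [Q, Matrix.det_fin_two_of, ah, bh]
    field_simp
    unfold Sh
    ring
  constructor
  · rw [hdet, div_le_div_iff_of_pos_right hS]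
    nlinarith [mul_nonneg hw1.le (pow_pos hh 4).le]
  · rw [div_lt_one hS]
    unfold Sh
    nlinarith [mul_pos hw2 (pow_pos hh 2)]
end

section
/- Let w1, w2, w3 > 0, h > 0 and 0 < λ ≤ 2. If (tr Q(h,λ))² − 4·det Q(h,λ) < 0, then the two complex eigenvalues of Q(h,λ) form a nonreal complex-conjugate pair, every complex eigenvalue μ of Q(h,λ) satisfies |μ|² = det Q(h,λ), and consequently the spectral radius of Q(h,λ) equals √(det Q(h,λ)) and is strictly less than 1. -/
/-- The matrix `Q` viewed as a complex matrix. -/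
noncomputable def Qc (w1 w2 w3 h lam : ℝ) : Matrix (Fin 2) (Fin 2) ℂ :=
  (Q w1 w2 w3 h lam).map (fun x => (x : ℂ))

theorem complex_pair_case (w1 w2 w3 h lam : ℝ) (hw1 : 0 < w1) (hw2 : 0 < w2)
    (hw3 : 0 < w3) (hh : 0 < h) (hlam0 : 0 < lam) (hlam2 : lam ≤ 2)
    (hdisc : (Q w1 w2 w3 h lam).trace ^ 2 - 4 * (Q w1 w2 w3 h lam).det < 0) :
    (∃ μ : ℂ, μ.im ≠ 0 ∧
        spectrum ℂ (Qc w1 w2 w3 h lam) = {μ, (starRingEnd ℂ) μ}) ∧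
    (∀ μ ∈ spectrum ℂ (Qc w1 w2 w3 h lam),
        ‖μ‖ ^ 2 = (Q w1 w2 w3 h lam).det) ∧
    spectralRadius ℂ (Qc w1 w2 w3 h lam)
      = ENNReal.ofReal (Real.sqrt (Q w1 w2 w3 h lam).det) ∧
    spectralRadius ℂ (Qc w1 w2 w3 h lam) < 1 := by
  set M := Q w1 w2 w3 h lam with hM
  set t : ℝ := M.trace with ht
  set d : ℝ := M.det with hd
  have hS : 0 < Sh w1 w2 w3 h := by
    unfold Sh; positivity
  -- det < 1
  have hd1 : d < 1 := by
    have hdc : d = 1 - h * bh w1 w2 w3 h + h ^ 2 / 2 * ah w1 w2 w3 h * lam := by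
      rw [hd, hM]; unfold Q
      rw [Matrix.det_fin_two_of]; ring
    rw [hdc]
    have e1 : h ^ 2 / 2 * ah w1 w2 w3 h * lam = (w1 * h ^ 4 * lam / 4) / Sh w1 w2 w3 h := by
      unfold ah; field_simp; ring
    have e2 : h * bh w1 w2 w3 h = (w2 * h ^ 2 + w1 * h ^ 4 / 2) / Sh w1 w2 w3 h := by
      unfold bh; field_simp
    rw [e1, e2]
    have hlt : w1 * h ^ 4 * lam / 4 < w2 * h ^ 2 + w1 * h ^ 4 / 2 := by nlinarith [mul_pos hw2 (pow_pos hh 2), mul_nonneg (mul_nonneg hw1.le (pow_pos hh 4).le) (sub_nonneg.mpr hlam2)]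
    have hfrac : (w1 * h ^ 4 * lam / 4) / Sh w1 w2 w3 h < (w2 * h ^ 2 + w1 * h ^ 4 / 2) / Sh w1 w2 w3 h := by
      apply div_lt_div_of_pos_right hlt hS
    linarith
  have hd0 : 0 < d := by nlinarith [sq_nonneg t]
  -- the eigenvalue pair
  set r : ℝ := Real.sqrt (4 * d - t ^ 2) with hrdef
  have hr0 : 0 < r := Real.sqrt_pos.mpr (by linarith)
  have hr2 : r ^ 2 = 4 * d - t ^ 2 := Real.sq_sqrt (by linarith)
  set μ : ℂ := (↑(t / 2) : ℂ) + (↑(r / 2) : ℂ) * Complex.I with hμ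
  have hμim : μ.im = r / 2 := by simp [hμ]
  have hconj : (starRingEnd ℂ) μ = (↑(t / 2) : ℂ) - (↑(r / 2) : ℂ) * Complex.I := by
    rw [hμ, map_add, map_mul, Complex.conj_I, Complex.conj_ofReal, Complex.conj_ofReal]; ring
  have hsum : μ + (starRingEnd ℂ) μ = (t : ℂ) := by
    rw [hconj, hμ]; push_cast; ring
  have hprod : μ * (starRingEnd ℂ) μ = (d : ℂ) := by
    rw [hconj, hμ]
    have hr2C : (r : ℂ) ^ 2 = 4 * (d : ℂ) - (t : ℂ) ^ 2 := by exact_mod_cast congrArg (Complex.ofReal) hr2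
    push_cast
    linear_combination (-(r:ℂ) ^ 2 / 4) * Complex.I_sq + (1 / 4 : ℂ) * hr2C
  -- trace/det facts
  have htr : M 0 0 + M 1 1 = t := (Matrix.trace_fin_two M).symm
  have hde : M 0 0 * M 1 1 - M 0 1 * M 1 0 = d := (Matrix.det_fin_two M).symm
  have htrC : (↑(M 0 0) : ℂ) + ↑(M 1 1) = (t : ℂ) := by exact_mod_cast congrArg Complex.ofReal htr
  have hdeC : (↑(M 0 0) : ℂ) * ↑(M 1 1) - ↑(M 0 1) * ↑(M 1 0) = (d : ℂ) := by
    exact_mod_cast congrArg Complex.ofReal hde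
  -- spectrum characterization
  have key : ∀ z : ℂ, z ∈ spectrum ℂ (Qc w1 w2 w3 h lam) ↔ (z - μ) * (z - (starRingEnd ℂ) μ) = 0 := by
    intro z
    rw [spectrum.mem_iff, Matrix.isUnit_iff_isUnit_det, isUnit_iff_ne_zero, not_ne_iff]
    have hdet : ((algebraMap ℂ (Matrix (Fin 2) (Fin 2) ℂ)) z - Qc w1 w2 w3 h lam).det
        = (z - μ) * (z - (starRingEnd ℂ) μ) := by
      have h00 : ((algebraMap ℂ (Matrix (Fin 2) (Fin 2) ℂ)) z - Qc w1 w2 w3 h lam) 0 0 = z - ↑(M 0 0) := by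
        simp [Qc, Matrix.algebraMap_matrix_apply, hM]
      have h01 : ((algebraMap ℂ (Matrix (Fin 2) (Fin 2) ℂ)) z - Qc w1 w2 w3 h lam) 0 1 = -↑(M 0 1) := by
        simp [Qc, Matrix.algebraMap_matrix_apply, hM]
      have h10 : ((algebraMap ℂ (Matrix (Fin 2) (Fin 2) ℂ)) z - Qc w1 w2 w3 h lam) 1 0 = -↑(M 1 0) := by
        simp [Qc, Matrix.algebraMap_matrix_apply, hM]
      have h11 : ((algebraMap ℂ (Matrix (Fin 2) (Fin 2) ℂ)) z - Qc w1 w2 w3 h lam) 1 1 = z - ↑(M 1 1) := by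
        simp [Qc, Matrix.algebraMap_matrix_apply, hM]
      rw [Matrix.det_fin_two, h00, h01, h10, h11]
      linear_combination (-z) * htrC + hdeC + z * hsum - hprod
    rw [hdet]
  have hspec : spectrum ℂ (Qc w1 w2 w3 h lam) = {μ, (starRingEnd ℂ) μ} := by
    ext z
    rw [key z, mul_eq_zero, sub_eq_zero, sub_eq_zero]
    simp [Set.mem_insert_iff]
  -- abs² = d
  have habs : ∀ z ∈ spectrum ℂ (Qc w1 w2 w3 h lam), ‖z‖ ^ 2 = d := by
    intro z hz
    rw [hspec] at hz
    have hnμ : ‖μ‖ ^ 2 = d := by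
      have := hprod
      rw [Complex.mul_conj] at this
      have : Complex.normSq μ = d := by exact_mod_cast this
      rw [Complex.sq_norm, this]
    rcases hz with h1 | h1
    · rw [h1]; exact hnμ
    · simp only [Set.mem_singleton_iff] at h1
      rw [h1, Complex.sq_norm, Complex.normSq_conj, ← Complex.sq_norm, hnμ]
  -- norm of μ
  have hnorm : ‖μ‖ = Real.sqrt d := by
    have : ‖μ‖ ^ 2 = d := habs μ (by rw [hspec]; simp)
    rw [← this, Real.sqrt_sq (norm_nonneg _)]
  have hnormc : ‖(starRingEnd ℂ) μ‖ = Real.sqrt d := by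
    rw [RCLike.norm_conj, hnorm]
  -- spectral radius
  have hsr : spectralRadius ℂ (Qc w1 w2 w3 h lam) = ENNReal.ofReal (Real.sqrt d) := by
    rw [spectralRadius, hspec]
    rw [iSup_insert, iSup_singleton]
    rw [← enorm_eq_nnnorm, ← enorm_eq_nnnorm, ← ofReal_norm, ← ofReal_norm, hnorm, hnormc, sup_idem]
  refine ⟨⟨μ, by rw [hμim]; positivity, hspec⟩, habs, hsr, ?_⟩
  rw [hsr, ENNReal.ofReal_lt_one]
  have : Real.sqrt d < Real.sqrt 1 := Real.sqrt_lt_sqrt (le_of_lt hd0) hd1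
  simpa using this
end

section
/- Let w1, w2, w3 > 0 and λ > 0. There exists h0 > 0 such that for every h ∈ (0, h0) with (tr Q(h,λ))² − 4·det Q(h,λ) ≥ 0, both eigenvalues of Q(h,λ) are real and positive, the quantity η := h·b^h + (h²/2)·a^h·λ is positive and satisfies 0 < 4·h²·a^h·λ / η² ≤ 1, the spectral radius of Q(h,λ) equals 1 − (η/2)·(1 − √(1 − 4·h²·a^h·λ / η²)), and this spectral radius is strictly less than 1. -/
theorem real_eigenvalue_case (w1 w2 w3 lam : ℝ) (hw1 : 0 < w1) (hw2 : 0 < w2)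
    (hw3 : 0 < w3) (hlam : 0 < lam) :
    ∃ h0 > 0, ∀ h : ℝ, 0 < h → h < h0 →
      (Q w1 w2 w3 h lam).trace ^ 2 - 4 * (Q w1 w2 w3 h lam).det ≥ 0 →
      (∀ μ ∈ spectrum ℂ (Qc w1 w2 w3 h lam), ∃ x : ℝ, 0 < x ∧ μ = (x : ℂ)) ∧
      (0 < h * bh w1 w2 w3 h + h ^ 2 / 2 * ah w1 w2 w3 h * lam) ∧
      (0 < 4 * h ^ 2 * ah w1 w2 w3 h * lam /
          (h * bh w1 w2 w3 h + h ^ 2 / 2 * ah w1 w2 w3 h * lam) ^ 2) ∧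
      (4 * h ^ 2 * ah w1 w2 w3 h * lam /
          (h * bh w1 w2 w3 h + h ^ 2 / 2 * ah w1 w2 w3 h * lam) ^ 2 ≤ 1) ∧
      spectralRadius ℂ (Qc w1 w2 w3 h lam)
        = ENNReal.ofReal
            (1 - (h * bh w1 w2 w3 h + h ^ 2 / 2 * ah w1 w2 w3 h * lam) / 2 *
              (1 - Real.sqrt (1 - 4 * h ^ 2 * ah w1 w2 w3 h * lam /
                (h * bh w1 w2 w3 h + h ^ 2 / 2 * ah w1 w2 w3 h * lam) ^ 2))) ∧
      spectralRadius ℂ (Qc w1 w2 w3 h lam) < 1 := by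
  refine ⟨min 1 (4 * w3 / (w1 * (1 + lam))), lt_min one_pos (by positivity), ?_⟩
  intro h hh hh0 hdisc
  have hh1 : h < 1 := lt_of_lt_of_le hh0 (min_le_left _ _)
  have hh2 : h < 4 * w3 / (w1 * (1 + lam)) := lt_of_lt_of_le hh0 (min_le_right _ _)
  have hS : 0 < Sh w1 w2 w3 h := by unfold Sh; positivity
  have ha : 0 < ah w1 w2 w3 h := by unfold ah; positivity
  have hb : 0 < bh w1 w2 w3 h := by unfold bh; positivity
  set a := ah w1 w2 w3 h with ha_def
  set b := bh w1 w2 w3 h with hb_def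
  set η := h * b + h ^ 2 / 2 * a * lam with hη_def
  clear_value a b
  have hηpos : 0 < η := by rw [hη_def]; positivity
  -- η < 1
  have hη1 : η < 1 := by
    have h3 : h ^ 3 ≤ 1 := pow_le_one₀ hh.le hh1.le
    have h4 : h ^ 4 ≤ h := by nlinarith
    have hh2' : h * (w1 * (1 + lam)) < 4 * w3 := by
      rwa [lt_div_iff₀ (by positivity)] at hh2
    have key : w1 * h ^ 4 * (1 + lam) < 4 * w3 := by
      nlinarith [mul_le_mul_of_nonneg_left h4
        (show (0:ℝ) ≤ w1 * (1 + lam) by positivity)]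
    have heq : η = (w2 * h ^ 2 + w1 * h ^ 4 / 2 + w1 * h ^ 4 * lam / 4) / Sh w1 w2 w3 h := by
      rw [hη_def, ha_def, hb_def]; unfold ah bh; field_simp; ring
    rw [heq, div_lt_one hS]
    unfold Sh; nlinarith
  have hP : 0 < 4 * h ^ 2 * a * lam := by positivity
  -- discriminant
  set Δ := η ^ 2 - 4 * h ^ 2 * a * lam with hΔ_def
  have hΔ : 0 ≤ Δ := by
    have htr : (Q w1 w2 w3 h lam).trace = 2 - η := by
      unfold Q; rw [Matrix.trace_fin_two_of]; rw [hη_def, ha_def, hb_def]; ring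
    have hdet : (Q w1 w2 w3 h lam).det = 1 - η + h ^ 2 * a * lam := by
      unfold Q; rw [Matrix.det_fin_two_of]; rw [hη_def, ha_def, hb_def]; ring
    rw [htr, hdet] at hdisc
    rw [hΔ_def]; nlinarith [hdisc]
  clear_value η
  have hΔlt : Δ < η ^ 2 := by rw [hΔ_def]; linarith
  have hsqrtΔ : Real.sqrt Δ < η := (Real.sqrt_lt' hηpos).mpr hΔlt
  have hsqΔ : Real.sqrt Δ ^ 2 = Δ := Real.sq_sqrt hΔ
  have hsqrtΔnn : 0 ≤ Real.sqrt Δ := Real.sqrt_nonneg Δ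
  set μp := 1 - η / 2 + Real.sqrt Δ / 2 with hμp_def
  set μm := 1 - η / 2 - Real.sqrt Δ / 2 with hμm_def
  clear_value Δ μp μm
  have hμmpos : 0 < μm := by rw [hμm_def]; linarith
  have hμppos : 0 < μp := by rw [hμp_def]; linarith
  have hμmle : μm ≤ μp := by rw [hμm_def, hμp_def]; linarith
  have hμplt1 : μp < 1 := by rw [hμp_def]; linarith
  -- spectrum computation
  have hspec : spectrum ℂ (Qc w1 w2 w3 h lam) = {(μp : ℂ), (μm : ℂ)} := by
    ext μ
    rw [spectrum.mem_iff]
    have hdet2 : ((algebraMap ℂ (Matrix (Fin 2) (Fin 2) ℂ)) μ - Qc w1 w2 w3 h lam).det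
        = (μ - (μp : ℂ)) * (μ - (μm : ℂ)) := by
      have e1 : ((algebraMap ℂ (Matrix (Fin 2) (Fin 2) ℂ)) μ - Qc w1 w2 w3 h lam).det
          = (μ - ((1 : ℝ) - h ^ 2 / 2 * a * lam)) * (μ - ((1 : ℝ) - h * b))
            - (0 - ((h : ℝ) - h ^ 2 / 2 * b)) * (0 - (-(h * a * lam) : ℝ)) := by
        rw [Matrix.det_fin_two]
        simp [Qc, Q, Matrix.algebraMap_matrix_apply, Matrix.sub_apply, Matrix.map_apply]
        rw [ha_def, hb_def]
      rw [e1]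
      have hsum : μp + μm = 2 - η := by rw [hμp_def, hμm_def]; ring
      have hprod : μp * μm = 1 - η + h ^ 2 * a * lam := by
        rw [hμp_def, hμm_def]
        have : (1 - η / 2 + Real.sqrt Δ / 2) * (1 - η / 2 - Real.sqrt Δ / 2)
            = (1 - η / 2) ^ 2 - Real.sqrt Δ ^ 2 / 4 := by ring
        rw [this, hsqΔ, hΔ_def]; ring
      have hsum' : (μp : ℂ) + (μm : ℂ) = ((2 - η : ℝ) : ℂ) := by push_cast [← hsum]; ring
      have hprod' : (μp : ℂ) * (μm : ℂ) = ((1 - η + h ^ 2 * a * lam : ℝ) : ℂ) := by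
        push_cast [← hprod]; ring
      have expand : (μ - (μp : ℂ)) * (μ - (μm : ℂ))
          = μ ^ 2 - ((μp : ℂ) + (μm : ℂ)) * μ + (μp : ℂ) * (μm : ℂ) := by ring
      rw [expand, hsum', hprod', hη_def]
      push_cast
      ring
    rw [Matrix.isUnit_iff_isUnit_det, hdet2, isUnit_iff_ne_zero]
    simp only [Set.mem_insert_iff, Set.mem_singleton_iff, not_not, mul_eq_zero,
      sub_eq_zero]
  -- ratio facts
  have hr1 : 4 * h ^ 2 * a * lam / η ^ 2 ≤ 1 := by
    rw [div_le_one (by positivity)]; rw [hΔ_def] at hΔ; linarith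
  have hr0 : 0 < 4 * h ^ 2 * a * lam / η ^ 2 := by positivity
  -- sqrt identity
  have hsqrt_id : Real.sqrt (1 - 4 * h ^ 2 * a * lam / η ^ 2) = Real.sqrt Δ / η := by
    have : 1 - 4 * h ^ 2 * a * lam / η ^ 2 = Δ / η ^ 2 := by
      rw [hΔ_def]; field_simp
    rw [this, Real.sqrt_div hΔ, Real.sqrt_sq hηpos.le]
  have hμp_eq : 1 - η / 2 * (1 - Real.sqrt (1 - 4 * h ^ 2 * a * lam / η ^ 2)) = μp := by
    rw [hsqrt_id, hμp_def]; field_simp; ring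
  -- spectral radius
  have hsr : spectralRadius ℂ (Qc w1 w2 w3 h lam) = ENNReal.ofReal μp := by
    rw [spectralRadius, hspec, iSup_pair]
    have e : ∀ x : ℝ, 0 ≤ x → (‖(x : ℂ)‖₊ : ENNReal) = ENNReal.ofReal x := by
      intro x hx
      rw [Complex.nnnorm_real, ← enorm_eq_nnnorm, Real.enorm_eq_ofReal hx]
    rw [e μp hμppos.le, e μm hμmpos.le]
    rw [sup_eq_left]
    exact ENNReal.ofReal_le_ofReal hμmle
  refine ⟨?_, hηpos, hr0, hr1, ?_, ?_⟩
  · intro μ hμ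
    rw [hspec] at hμ
    rcases hμ with h1 | h1
    · exact ⟨μp, hμppos, h1⟩
    · exact ⟨μm, hμmpos, h1⟩
  · rw [hsr, hμp_eq]
  · rw [hsr]
    rw [ENNReal.ofReal_lt_one]
    exact hμplt1
end

section
/- (Lemma 1.) Let w1, w2, w3 > 0. For every λ with 0 < λ ≤ 2 there exists h0 > 0 such that for all h ∈ (0, h0), the spectral radius of the matrix Q(h,λ) is strictly less than 1. -/
lemma quadRootBound (t d : ℝ) (h1 : t < 1 + d) (h2 : -(1 + d) < t) (h3 : d < 1)
    (μ : ℂ) (hroot : μ ^ 2 - (t : ℂ) * μ + (d : ℂ) = 0) :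
    ‖μ‖ ≤ max (Real.sqrt |d|) (1 - min (1 - t + d) (1 + t + d) / 4) := by
  set x := μ.re with hxdef
  set y := μ.im with hydef
  have hre : x ^ 2 - y ^ 2 - t * x + d = 0 := by
    have := congrArg Complex.re hroot
    simp [pow_two, Complex.mul_re, Complex.mul_im] at this
    linarith
  have him : 2 * x * y - t * y = 0 := by
    have := congrArg Complex.im hroot
    simp [pow_two, Complex.mul_re, Complex.mul_im] at this
    linarith
  by_cases hy : y = 0
  · -- real root
    have hx : x ^ 2 - t * x + d = 0 := by rw [hy] at hre; nlinarith [hre]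
    have hμ : μ = (x : ℂ) := Complex.ext rfl (by simpa using hy)
    have hnorm : ‖μ‖ = |x| := by rw [hμ, Complex.norm_real, Real.norm_eq_abs]
    have hx1 : x < 1 := by
      by_contra hc
      push_neg at hc
      nlinarith [mul_nonneg (by linarith : (0:ℝ) ≤ x - 1) (by linarith : (0:ℝ) ≤ x + 1 - t)]
    have hx2 : -1 < x := by
      by_contra hc
      push_neg at hc
      nlinarith [mul_nonneg (by linarith : (0:ℝ) ≤ -1 - x) (by linarith : (0:ℝ) ≤ 1 + t - x)]
    have b1 : 1 - t + d ≤ 4 * (1 - x) := by nlinarith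
    have b2 : 1 + t + d ≤ 4 * (1 + x) := by nlinarith
    refine le_max_of_le_right ?_
    rw [hnorm, abs_le]
    constructor
    · have := min_le_right (1 - t + d) (1 + t + d); linarith
    · have := min_le_left (1 - t + d) (1 + t + d); linarith
  · -- complex pair
    have ht : t = 2 * x := by
      rcases mul_eq_zero.mp (show y * (2 * x - t) = 0 by linarith [him]) with h | h
      · exact absurd h hy
      · linarith
    have hsq : x ^ 2 + y ^ 2 = d := by nlinarith [hre, ht]
    have hnorm : ‖μ‖ = Real.sqrt d := by
      rw [Complex.norm_def, Complex.normSq_apply, ← hxdef, ← hydef]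
      rw [show x * x + y * y = d by nlinarith]
    refine le_max_of_le_left ?_
    rw [hnorm]
    exact Real.sqrt_le_sqrt (le_abs_self d)

theorem spectral_radius_lt_one (w1 w2 w3 : ℝ) (hw1 : 0 < w1) (hw2 : 0 < w2)
    (hw3 : 0 < w3) :
    ∀ lam : ℝ, 0 < lam → lam ≤ 2 →
      ∃ h0 > 0, ∀ h : ℝ, 0 < h → h < h0 →
        spectralRadius ℂ (Qc w1 w2 w3 h lam) < 1 := by
  intro lam hl0 hl2
  refine ⟨1, one_pos, fun h hh0 _ => ?_⟩
  have hS : 0 < Sh w1 w2 w3 h := by rw [Sh]; positivity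
  set a := ah w1 w2 w3 h with ha_def
  set b := bh w1 w2 w3 h with hb_def
  set t : ℝ := 2 - h ^ 2 / 2 * a * lam - h * b with ht_def
  set d : ℝ := 1 - h * b + h ^ 2 / 2 * a * lam with hd_def
  -- key inequalities
  have hX : 0 < h ^ 2 / 2 * a * lam := by
    have ha : 0 < a := by
      rw [ha_def, ah]
      exact div_pos (by positivity) (by linarith)
    positivity
  have hab : h ^ 2 / 2 * a * lam < h * b := by
    rw [ha_def, hb_def, ah, bh]
    rw [show h ^ 2 / 2 * (w1 * h ^ 2 / (2 * Sh w1 w2 w3 h)) * lam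
        = (w1 * h ^ 4 * lam / 4) / Sh w1 w2 w3 h by field_simp; ring]
    rw [show h * ((w2 * h + w1 * h ^ 3 / 2) / Sh w1 w2 w3 h)
        = (w2 * h ^ 2 + w1 * h ^ 4 / 2) / Sh w1 w2 w3 h by field_simp]
    rw [div_lt_div_iff₀ hS hS]
    have key : 0 < (w2 * h ^ 2 + w1 * h ^ 4 / 2 - w1 * h ^ 4 * lam / 4) * Sh w1 w2 w3 h :=
      mul_pos (by nlinarith [mul_pos hw2 (pow_pos hh0 2), mul_nonneg (mul_nonneg hw1.le (pow_pos hh0 4).le) (show (0:ℝ) ≤ 2 - lam by linarith)]) hS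
    nlinarith [key]
  have hb2 : h * b < 2 := by
    rw [hb_def, bh, show h * ((w2 * h + w1 * h ^ 3 / 2) / Sh w1 w2 w3 h)
        = (w2 * h ^ 2 + w1 * h ^ 4 / 2) / Sh w1 w2 w3 h by field_simp]
    rw [div_lt_iff₀ hS, Sh]
    nlinarith [pow_pos hh0 2, pow_pos hh0 4]
  have h1 : t < 1 + d := by rw [ht_def, hd_def]; linarith
  have h2 : -(1 + d) < t := by rw [ht_def, hd_def]; linarith
  have h3 : d < 1 := by rw [hd_def]; linarith
  -- spectrum members are roots of the characteristic polynomial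
  have hroot : ∀ k : ℂ, k ∈ spectrum ℂ (Qc w1 w2 w3 h lam) →
      k ^ 2 - (t : ℂ) * k + (d : ℂ) = 0 := by
    intro k hk
    rw [spectrum.mem_iff] at hk
    have hdet : (algebraMap ℂ (Matrix (Fin 2) (Fin 2) ℂ) k - Qc w1 w2 w3 h lam).det = 0 := by
      by_contra hne
      exact hk ((Matrix.isUnit_iff_isUnit_det _).mpr (Ne.isUnit hne))
    rw [Matrix.det_fin_two] at hdet
    simp [Qc, Q, Matrix.algebraMap_matrix_apply] at hdet
    rw [ht_def, hd_def, ha_def, hb_def]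
    push_cast at hdet ⊢
    linear_combination hdet
  -- bound the spectral radius
  set c : ℝ := max (Real.sqrt |d|) (1 - min (1 - t + d) (1 + t + d) / 4) with hc_def
  have hc1 : c < 1 := by
    rw [hc_def]
    apply max_lt
    · have hd1 : |d| < 1 := abs_lt.mpr ⟨by linarith, h3⟩
      calc Real.sqrt |d| < Real.sqrt 1 := Real.sqrt_lt_sqrt (abs_nonneg d) hd1
        _ = 1 := Real.sqrt_one
    · have : 0 < min (1 - t + d) (1 + t + d) := lt_min (by linarith) (by linarith)
      linarith
  have hle : spectralRadius ℂ (Qc w1 w2 w3 h lam) ≤ ENNReal.ofReal c := by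
    rw [spectralRadius]
    refine iSup₂_le fun k hk => ?_
    have hbnd := quadRootBound t d h1 h2 h3 k (hroot k hk)
    calc (‖k‖₊ : ENNReal) = ENNReal.ofReal ‖k‖ := (ofReal_norm k).symm
      _ ≤ ENNReal.ofReal c := ENNReal.ofReal_le_ofReal (by rw [hc_def]; exact hbnd)
  calc spectralRadius ℂ (Qc w1 w2 w3 h lam) ≤ ENNReal.ofReal c := hle
    _ < 1 := ENNReal.ofReal_lt_one.mpr hc1
end

section
/- (Lemma 2, uniform disagreement bound.) Let w1, w2, w3 > 0, let G be a connected simple undirected graph on N ≥ 2 vertices with Laplacian L and degree matrix D, and let d > 0, ν > 0. Then there exists h0 > 0 such that for every h ∈ (0, h0) there exist constants S1 > 0 and S2 > 0 (independent of the initial data and of the disturbance) with the following property: for every choice of initial vectors Δ⁰, Δ̇⁰ ∈ ℝ^N and every disturbance sequence (αᵏ)_{k≥1} with ‖αᵏ‖_∞ ≤ d·e^{−ν·k·h} for all k ≥ 1, the closed-loop sequences satisfy, for all ℓ ≥ 1 and all i, j ∈ {1,…,N}: |Δˡ_i − Δˡ_j| ≤ S1·max{‖Δ⁰‖_∞, ‖Δ̇⁰‖_∞}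 + S2·d. -/
open Matrix

/-- Helper: `(k+1) ρ^k ≤ 1/(1-ρ)` for `0 ≤ ρ < 1`. -/
private lemma geom_aux {ρ : ℝ} (h0 : 0 ≤ ρ) (h1 : ρ < 1) :
    ∀ k : ℕ, ((k : ℝ) + 1) * ρ ^ k ≤ 1 / (1 - ρ) := by
  have h1' : 0 < 1 - ρ := by linarith
  have key : ∀ k : ℕ, ((k : ℝ) + 1) * ρ ^ k * (1 - ρ) ≤ 1 := by
    intro k
    induction k with
    | zero => simp; nlinarith
    | succ n ih =>
      have hpow : ρ ^ (n + 1) ≤ 1 := pow_le_one₀ h0 h1.le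
      have hpn : 0 ≤ ρ ^ n := pow_nonneg h0 n
      push_cast
      have e : ((n : ℝ) + 1 + 1) * ρ ^ (n + 1) * (1 - ρ)
          = ρ * (((n : ℝ) + 1) * ρ ^ n * (1 - ρ)) + ρ ^ (n + 1) * (1 - ρ) := by ring
      rw [e]
      have f1 : ρ * (((n : ℝ) + 1) * ρ ^ n * (1 - ρ)) ≤ ρ * 1 :=
        mul_le_mul_of_nonneg_left ih h0
      have f2 : ρ ^ (n + 1) * (1 - ρ) ≤ 1 * (1 - ρ) :=
        mul_le_mul_of_nonneg_right hpow h1'.le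
      linarith
  intro k
  rw [le_div_iff₀ h1']
  exact key k

set_option maxHeartbeats 1000000 in
/-- ISS-type bound for a 2×2 Schur-stable driven linear recursion. -/
private lemma iss_bound (p q r s : ℝ)
    (hDe1 : p * s - q * r < 1) (hDe2 : -1 < p * s - q * r)
    (hT1 : p + s < 1 + (p * s - q * r)) (hT2 : -(1 + (p * s - q * r)) < p + s) :
    ∃ C1 > 0, ∃ C2 > 0,
      ∀ (x y g1 g2 : ℕ → ℝ) (Γ : ℝ), 0 ≤ Γ →
        (∀ k, 1 ≤ k → |g1 k| ≤ Γ) → (∀ k, 1 ≤ k → |g2 k| ≤ Γ) →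
        (∀ k, x (k + 1) = p * x k + q * y k + g1 (k + 1)) →
        (∀ k, y (k + 1) = r * x k + s * y k + g2 (k + 1)) →
        ∀ k, |x k| ≤ C1 * max |x 0| |y 0| + C2 * Γ := by
  -- roots of z² - (p+s) z + (ps - qr)
  obtain ⟨μ1, μ2, hsum, hprod, hμ1, hμ2⟩ :
      ∃ μ1 μ2 : ℂ, μ1 + μ2 = ((p + s : ℝ) : ℂ) ∧ μ1 * μ2 = ((p * s - q * r : ℝ) : ℂ) ∧
        ‖μ1‖ < 1 ∧ ‖μ2‖ < 1 := by
    rcases le_or_gt 0 ((p + s) ^ 2 - 4 * (p * s - q * r)) with hdisc | hdisc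
    · set u := Real.sqrt ((p + s) ^ 2 - 4 * (p * s - q * r)) with hu
      have hu0 : 0 ≤ u := Real.sqrt_nonneg _
      have hu2 : u ^ 2 = (p + s) ^ 2 - 4 * (p * s - q * r) := Real.sq_sqrt hdisc
      have hTlt : p + s < 2 := by nlinarith
      have hTgt : -2 < p + s := by nlinarith
      have h1 : u < 2 - (p + s) := by
        by_contra hc
        push_neg at hc
        nlinarith [mul_le_mul hc hc (by linarith) hu0]
      have h2 : u < 2 + (p + s) := by
        by_contra hc
        push_neg at hc
        nlinarith [mul_le_mul hc hc (by linarith) hu0]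
      refine ⟨(((p + s) + u) / 2 : ℝ), (((p + s) - u) / 2 : ℝ), ?_, ?_, ?_, ?_⟩
      · push_cast; ring
      · have hre : (((p + s) + u) / 2) * (((p + s) - u) / 2) = p * s - q * r := by nlinarith
        exact_mod_cast congrArg Complex.ofReal hre
      · rw [Complex.norm_real, Real.norm_eq_abs, abs_lt]
        constructor <;> nlinarith
      · rw [Complex.norm_real, Real.norm_eq_abs, abs_lt]
        constructor <;> nlinarith
    · set u := Real.sqrt (4 * (p * s - q * r) - (p + s) ^ 2) with hu
      have hu0 : 0 ≤ u := Real.sqrt_nonneg _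
      have hu2 : u ^ 2 = 4 * (p * s - q * r) - (p + s) ^ 2 := Real.sq_sqrt (by linarith)
      have hDe0 : 0 < p * s - q * r := by nlinarith [sq_nonneg (p + s)]
      have habs : ‖((((p + s) / 2 : ℝ) : ℂ) + ((u / 2 : ℝ) : ℂ) * Complex.I)‖
          = Real.sqrt (p * s - q * r) := by
        rw [Complex.norm_add_mul_I]
        congr 1
        nlinarith
      have habs' : ‖((((p + s) / 2 : ℝ) : ℂ) - ((u / 2 : ℝ) : ℂ) * Complex.I)‖
          = Real.sqrt (p * s - q * r) := by
        have e : ((((p + s) / 2 : ℝ) : ℂ) - ((u / 2 : ℝ) : ℂ) * Complex.I)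
            = (((p + s) / 2 : ℝ) : ℂ) + ((-(u / 2) : ℝ) : ℂ) * Complex.I := by
          push_cast; ring
        rw [e, Complex.norm_add_mul_I]
        congr 1
        nlinarith
      have hsq : Real.sqrt (p * s - q * r) < 1 := by
        rw [show (1 : ℝ) = Real.sqrt 1 by simp [Real.sqrt_one]]
        exact Real.sqrt_lt_sqrt hDe0.le hDe1
      refine ⟨(((p + s) / 2 : ℝ) : ℂ) + ((u / 2 : ℝ) : ℂ) * Complex.I,
        (((p + s) / 2 : ℝ) : ℂ) - ((u / 2 : ℝ) : ℂ) * Complex.I, ?_, ?_, ?_, ?_⟩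
      · push_cast; ring
      · have hI : Complex.I ^ 2 = -1 := Complex.I_sq
        have hc : ((u : ℝ) : ℂ) ^ 2 = ((4 * (p * s - q * r) - (p + s) ^ 2 : ℝ) : ℂ) := by
          exact_mod_cast congrArg Complex.ofReal hu2
        push_cast at hc ⊢
        linear_combination (-(Complex.I ^ 2) / 4) * hc +
          (((p : ℂ) + s) ^ 2 / 4 - ((p : ℂ) * s - q * r)) * hI
      · rw [habs]; exact hsq
      · rw [habs']; exact hsq
  obtain ⟨ρ, hμ1ρ, hμ2ρ, hρ0, hρ1⟩ : ∃ ρ : ℝ, ‖μ1‖ ≤ ρ ∧ ‖μ2‖ ≤ ρ ∧ 0 ≤ ρ ∧ ρ < 1 :=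
    ⟨max ‖μ1‖ ‖μ2‖, le_max_left _ _, le_max_right _ _,
      le_trans (norm_nonneg _) (le_max_left _ _), max_lt hμ1 hμ2⟩
  have h1ρ : 0 < 1 - ρ := by linarith
  refine ⟨1 + (1 + |p| + |q|) / (1 - ρ), ?_, 1 / (1 - ρ) + (1 + |s| + |q|) / (1 - ρ) ^ 2, ?_, ?_⟩
  · have : 0 ≤ (1 + |p| + |q|) / (1 - ρ) :=
      div_nonneg (by positivity) h1ρ.le
    linarith
  · have h1 : 0 < 1 / (1 - ρ) := by positivity
    have h2 : 0 ≤ (1 + |s| + |q|) / (1 - ρ) ^ 2 := div_nonneg (by positivity) (by positivity)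
    linarith
  intro x y g1 g2 Γ hΓ hg1 hg2 hx hy
  have hM0 : 0 ≤ max |x 0| |y 0| := le_trans (abs_nonneg _) (le_max_left _ _)
  -- second order recursion
  have hx2 : ∀ k, x (k + 1 + 1) = (p + s) * x (k + 1) - (p * s - q * r) * x k +
      (g1 (k + 1 + 1) - s * g1 (k + 1) + q * g2 (k + 1)) := by
    intro k
    linear_combination hx (k + 1) + q * hy k - s * hx k
  -- complex first order recursion for v k = x(k+1) - μ1 x k
  have hvrec : ∀ k, ((x (k + 1 + 1) : ℝ) : ℂ) - μ1 * ((x (k + 1) : ℝ) : ℂ) =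
      μ2 * (((x (k + 1) : ℝ) : ℂ) - μ1 * ((x k : ℝ) : ℂ)) +
      ((g1 (k + 1 + 1) - s * g1 (k + 1) + q * g2 (k + 1) : ℝ) : ℂ) := by
    intro k
    have hc : ((x (k + 1 + 1) : ℝ) : ℂ) = ((p + s : ℝ) : ℂ) * ((x (k + 1) : ℝ) : ℂ)
        - ((p * s - q * r : ℝ) : ℂ) * ((x k : ℝ) : ℂ)
        + ((g1 (k + 1 + 1) - s * g1 (k + 1) + q * g2 (k + 1) : ℝ) : ℂ) := by
      exact_mod_cast congrArg Complex.ofReal (hx2 k)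
    linear_combination hc - ((x (k + 1) : ℝ) : ℂ) * hsum + ((x k : ℝ) : ℂ) * hprod
  set A := ‖((x 1 : ℝ) : ℂ) - μ1 * ((x 0 : ℝ) : ℂ)‖ with hAdef
  have hA0 : 0 ≤ A := norm_nonneg _
  clear_value A
  have hΓ'0 : 0 ≤ (1 + |s| + |q|) * Γ := mul_nonneg (by positivity) hΓ
  have hδb : ∀ k, |g1 (k + 1 + 1) - s * g1 (k + 1) + q * g2 (k + 1)| ≤ (1 + |s| + |q|) * Γ := by
    intro k
    have b1 := hg1 (k + 1 + 1) (by omega)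
    have b2 := hg1 (k + 1) (by omega)
    have b3 := hg2 (k + 1) (by omega)
    have t1 := abs_add_le (g1 (k + 1 + 1) - s * g1 (k + 1)) (q * g2 (k + 1))
    have t2 := abs_sub (g1 (k + 1 + 1)) (s * g1 (k + 1))
    rw [abs_mul] at t1 t2
    linarith [mul_le_mul_of_nonneg_left b2 (abs_nonneg s),
      mul_le_mul_of_nonneg_left b3 (abs_nonneg q)]
  -- bound on v
  have hvb : ∀ k, ‖((x (k + 1) : ℝ) : ℂ) - μ1 * ((x k : ℝ) : ℂ)‖ ≤
      ρ ^ k * A + ((1 + |s| + |q|) * Γ) / (1 - ρ) := by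
    intro k
    induction k with
    | zero =>
      have hnn : 0 ≤ ((1 + |s| + |q|) * Γ) / (1 - ρ) := div_nonneg hΓ'0 h1ρ.le
      simp only [pow_zero, one_mul, Nat.zero_add]
      rw [← hAdef]
      linarith
    | succ n ih =>
      have h1 := hvrec n
      calc ‖((x (n + 1 + 1) : ℝ) : ℂ) - μ1 * ((x (n + 1) : ℝ) : ℂ)‖
          = ‖μ2 * (((x (n + 1) : ℝ) : ℂ) - μ1 * ((x n : ℝ) : ℂ)) +
              ((g1 (n + 1 + 1) - s * g1 (n + 1) + q * g2 (n + 1) : ℝ) : ℂ)‖ := by rw [h1]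
        _ ≤ ‖μ2 * (((x (n + 1) : ℝ) : ℂ) - μ1 * ((x n : ℝ) : ℂ))‖ +
              ‖((g1 (n + 1 + 1) - s * g1 (n + 1) + q * g2 (n + 1) : ℝ) : ℂ)‖ := norm_add_le _ _
        _ ≤ ρ * (ρ ^ n * A + ((1 + |s| + |q|) * Γ) / (1 - ρ)) + (1 + |s| + |q|) * Γ := by
            rw [norm_mul, Complex.norm_real, Real.norm_eq_abs]
            have hmm := mul_le_mul hμ2ρ ih (norm_nonneg _) hρ0
            have := hδb n
            linarith
        _ ≤ ρ ^ (n + 1) * A + ((1 + |s| + |q|) * Γ) / (1 - ρ) := by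
            have he : ρ * (ρ ^ n * A + ((1 + |s| + |q|) * Γ) / (1 - ρ)) + (1 + |s| + |q|) * Γ
                = ρ ^ (n + 1) * A + ((1 + |s| + |q|) * Γ) / (1 - ρ) := by
              field_simp
              ring
            linarith [le_of_eq he]
  -- bound on x
  have hxb : ∀ k, |x (k + 1)| ≤ ρ ^ (k + 1) * |x 0| + ((k : ℝ) + 1) * ρ ^ k * A +
      ((1 + |s| + |q|) * Γ) / (1 - ρ) ^ 2 := by
    intro k
    have hstep : ∀ m : ℕ, |x (m + 1)| ≤ ρ * |x m| +
        ‖((x (m + 1) : ℝ) : ℂ) - μ1 * ((x m : ℝ) : ℂ)‖ := by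
      intro m
      have h0 : ((x (m + 1) : ℝ) : ℂ) = μ1 * ((x m : ℝ) : ℂ) +
          (((x (m + 1) : ℝ) : ℂ) - μ1 * ((x m : ℝ) : ℂ)) := by ring
      calc |x (m + 1)| = ‖((x (m + 1) : ℝ) : ℂ)‖ := by
            rw [Complex.norm_real, Real.norm_eq_abs]
        _ = ‖μ1 * ((x m : ℝ) : ℂ) + (((x (m + 1) : ℝ) : ℂ) - μ1 * ((x m : ℝ) : ℂ))‖ := by
            rw [← h0]
        _ ≤ ‖μ1 * ((x m : ℝ) : ℂ)‖ + ‖(((x (m + 1) : ℝ) : ℂ) - μ1 * ((x m : ℝ) : ℂ))‖ :=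
            norm_add_le _ _
        _ ≤ ρ * |x m| + ‖(((x (m + 1) : ℝ) : ℂ) - μ1 * ((x m : ℝ) : ℂ))‖ := by
            rw [norm_mul, Complex.norm_real, Real.norm_eq_abs]
            have := mul_le_mul_of_nonneg_right hμ1ρ (abs_nonneg (x m))
            linarith
    induction k with
    | zero =>
      have h1 := hstep 0
      have h2 := hvb 0
      have h3 : ((1 + |s| + |q|) * Γ) / (1 - ρ) ≤ ((1 + |s| + |q|) * Γ) / (1 - ρ) ^ 2 := by
        rw [div_le_div_iff₀ h1ρ (by positivity)]
        have hsq : (1 - ρ) ^ 2 ≤ 1 - ρ := by nlinarith [mul_nonneg h1ρ.le hρ0]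
        exact mul_le_mul_of_nonneg_left hsq hΓ'0
      simp only [pow_zero, one_mul, pow_one] at h2 ⊢
      push_cast
      linarith
    | succ n ih =>
      have h1 := hstep (n + 1)
      have h2 := hvb (n + 1)
      have he : ρ * (ρ ^ (n + 1) * |x 0| + ((n : ℝ) + 1) * ρ ^ n * A +
          ((1 + |s| + |q|) * Γ) / (1 - ρ) ^ 2) +
          (ρ ^ (n + 1) * A + ((1 + |s| + |q|) * Γ) / (1 - ρ))
          = ρ ^ (n + 1 + 1) * |x 0| + (((n : ℝ) + 1) + 1) * ρ ^ (n + 1) * A +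
          ((1 + |s| + |q|) * Γ) / (1 - ρ) ^ 2 := by
        field_simp
        ring
      have h4 : ρ * |x (n + 1)| ≤ ρ * (ρ ^ (n + 1) * |x 0| + ((n : ℝ) + 1) * ρ ^ n * A +
          ((1 + |s| + |q|) * Γ) / (1 - ρ) ^ 2) := mul_le_mul_of_nonneg_left ih hρ0
      push_cast
      push_cast at he
      linarith
  -- final bound
  intro k
  cases k with
  | zero =>
    have h1 : |x 0| ≤ max |x 0| |y 0| := le_max_left _ _
    have h2 : 0 ≤ (1 + |p| + |q|) / (1 - ρ) := div_nonneg (by positivity) h1ρ.le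
    have h4 : 0 ≤ (1 + |p| + |q|) / (1 - ρ) * max |x 0| |y 0| := mul_nonneg h2 hM0
    have h5 : 0 ≤ 1 / (1 - ρ) + (1 + |s| + |q|) / (1 - ρ) ^ 2 := by
      have t1 : 0 ≤ 1 / (1 - ρ) := by positivity
      have t2 : 0 ≤ (1 + |s| + |q|) / (1 - ρ) ^ 2 := div_nonneg (by positivity) (by positivity)
      linarith
    have h3 : 0 ≤ (1 / (1 - ρ) + (1 + |s| + |q|) / (1 - ρ) ^ 2) * Γ := mul_nonneg h5 hΓ
    linarith
  | succ n =>
    have h1 := hxb n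
    have hpow : ρ ^ (n + 1) ≤ 1 := pow_le_one₀ hρ0 hρ1.le
    have h2 : ρ ^ (n + 1) * |x 0| ≤ |x 0| := by
      have := mul_le_mul_of_nonneg_right hpow (abs_nonneg (x 0))
      linarith
    -- bound A
    have hx1 : |x 1| ≤ |p| * max |x 0| |y 0| + |q| * max |x 0| |y 0| + Γ := by
      rw [show x 1 = p * x 0 + q * y 0 + g1 1 from hx 0]
      have hb := hg1 1 le_rfl
      have t := abs_add_three (p * x 0) (q * y 0) (g1 1)
      rw [abs_mul, abs_mul] at t
      linarith [mul_le_mul_of_nonneg_left (le_max_left |x 0| |y 0|) (abs_nonneg p),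
        mul_le_mul_of_nonneg_left (le_max_right |x 0| |y 0|) (abs_nonneg q)]
    have hA1 : A ≤ (1 + |p| + |q|) * max |x 0| |y 0| + Γ := by
      have t1 : A ≤ ‖((x 1 : ℝ) : ℂ)‖ + ‖μ1 * ((x 0 : ℝ) : ℂ)‖ := by
        rw [hAdef]; exact norm_sub_le _ _
      rw [norm_mul, Complex.norm_real, Complex.norm_real, Real.norm_eq_abs,
        Real.norm_eq_abs] at t1
      have t2 : ‖μ1‖ * |x 0| ≤ 1 * |x 0| :=
        mul_le_mul_of_nonneg_right (le_of_lt hμ1) (abs_nonneg _)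
      have t3 : |x 0| ≤ max |x 0| |y 0| := le_max_left _ _
      linarith
    have hgeo : ((n : ℝ) + 1) * ρ ^ n ≤ 1 / (1 - ρ) := geom_aux hρ0 hρ1 n
    have h3 : ((n : ℝ) + 1) * ρ ^ n * A ≤ (1 / (1 - ρ)) * A :=
      mul_le_mul_of_nonneg_right hgeo hA0
    have h4 : (1 / (1 - ρ)) * A ≤ (1 / (1 - ρ)) * ((1 + |p| + |q|) * max |x 0| |y 0| + Γ) :=
      mul_le_mul_of_nonneg_left hA1 (by positivity)
    have h5 : |x 0| ≤ max |x 0| |y 0| := le_max_left _ _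
    have heq : (1 + (1 + |p| + |q|) / (1 - ρ)) * max |x 0| |y 0| +
        (1 / (1 - ρ) + (1 + |s| + |q|) / (1 - ρ) ^ 2) * Γ
        = max |x 0| |y 0| + (1 / (1 - ρ)) * ((1 + |p| + |q|) * max |x 0| |y 0| + Γ) +
          ((1 + |s| + |q|) * Γ) / (1 - ρ) ^ 2 := by
      ring
    rw [heq]
    linarith only [h1, h2, h3, h4, h5]

set_option maxHeartbeats 10000000 in
theorem uniform_disagreement_bound
    (w1 w2 w3 : ℝ) (hw1 : 0 < w1) (hw2 : 0 < w2) (hw3 : 0 < w3)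
    (N : ℕ) (hN : 2 ≤ N) (G : SimpleGraph (Fin N)) [DecidableRel G.Adj]
    (hG : G.Connected) (d ν : ℝ) (hd : 0 < d) (hν : 0 < ν) :
    ∃ h0 > 0, ∀ h : ℝ, 0 < h → h < h0 →
      ∃ S1 > 0, ∃ S2 > 0,
        ∀ Δ Δdot U α : ℕ → Fin N → ℝ,
          (∀ k : ℕ, 1 ≤ k → ‖α k‖ ≤ d * Real.exp (-ν * k * h)) →
          (∀ k : ℕ, 1 ≤ k →
            U k = -(ah w1 w2 w3 h •
                    (((Matrix.diagonal fun i => ((G.degree i : ℝ))⁻¹) * G.lapMatrix ℝ)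
                      *ᵥ Δ (k - 1)))
                  - bh w1 w2 w3 h • Δdot (k - 1) + ah w1 w2 w3 h • α k ∧
            Δ k = Δ (k - 1) - α k + h • Δdot (k - 1) + (h ^ 2 / 2) • U k ∧
            Δdot k = Δdot (k - 1) + h • U k) →
          ∀ l : ℕ, 1 ≤ l → ∀ i j : Fin N,
            |Δ l i - Δ l j| ≤ S1 * max ‖Δ 0‖ ‖Δdot 0‖ + S2 * d := by
  classical
  haveI hNtriv : Nontrivial (Fin N) := Fin.nontrivial_iff_two_le.mpr hN
  have hNR : (2:ℝ) ≤ (N:ℝ) := by exact_mod_cast hN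
  have hNpos : (0:ℝ) < (N:ℝ) := by linarith
  have hdeg : ∀ i : Fin N, 0 < G.degree i := by
    intro i
    obtain ⟨j, hj⟩ := exists_ne i
    obtain ⟨w⟩ := hG.preconnected i j
    rw [SimpleGraph.degree_pos_iff_exists_adj]
    cases w with
    | nil => exact absurd rfl hj
    | cons hadj _ => exact ⟨_, hadj⟩
  set L := G.lapMatrix ℝ with hLdef
  have hd1 : ∀ i : Fin N, (1:ℝ) ≤ (G.degree i : ℝ) := by
    intro i
    exact_mod_cast hdeg i
  have hdN : ∀ i : Fin N, (G.degree i : ℝ) ≤ (N:ℝ) := by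
    intro i
    have h := G.degree_lt_card_verts i
    rw [Fintype.card_fin] at h
    exact_mod_cast h.le
  set sq : Fin N → ℝ := fun i => Real.sqrt (G.degree i) with hsqdef
  have hsq1 : ∀ i, 1 ≤ sq i := by
    intro i
    have h := Real.sqrt_le_sqrt (hd1 i)
    rwa [Real.sqrt_one] at h
  have hsq0 : ∀ i, 0 < sq i := fun i => lt_of_lt_of_le one_pos (hsq1 i)
  have hsqne : ∀ i, sq i ≠ 0 := fun i => (hsq0 i).ne'
  have hsqN : ∀ i, sq i ≤ (N:ℝ) := by
    intro i
    have h1 : (G.degree i : ℝ) ≤ (N:ℝ)^2 := le_trans (hdN i) (by nlinarith)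
    calc sq i ≤ Real.sqrt ((N:ℝ)^2) := Real.sqrt_le_sqrt h1
    _ = (N:ℝ) := Real.sqrt_sq (by linarith)
  have hss : ∀ i, sq i * sq i = (G.degree i : ℝ) := fun i => Real.mul_self_sqrt (by positivity)
  set B : Matrix (Fin N) (Fin N) ℝ := Matrix.of (fun i j => (sq i)⁻¹ * L i j * (sq j)⁻¹)
    with hBdef
  have hLsymm : ∀ i j : Fin N, L j i = L i j := fun i j => (G.isSymm_lapMatrix (R := ℝ)).apply i j
  have hBsym : B.IsHermitian := by
    show Bᴴ = B
    ext i j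
    simp only [Matrix.conjTranspose_apply, hBdef, Matrix.of_apply, star_trivial]
    rw [hLsymm j i]
    ring
  have hBpsd : B.PosSemidef := by
    have h1 := (SimpleGraph.posSemidef_lapMatrix ℝ G).mul_mul_conjTranspose_same
      (Matrix.diagonal fun i => (sq i)⁻¹)
    have h2 : Matrix.diagonal (fun i => (sq i)⁻¹) * G.lapMatrix ℝ *
        (Matrix.diagonal fun i => (sq i)⁻¹)ᴴ = B := by
      rw [Matrix.diagonal_conjTranspose]
      ext i j
      rw [Matrix.mul_diagonal, Matrix.diagonal_mul]
      simp only [hBdef, Matrix.of_apply, Pi.star_apply, star_trivial, hLdef]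
    rwa [h2] at h1
  set lam := hBsym.eigenvalues with hlamdef
  set vv : Fin N → Fin N → ℝ :=
    fun pp => (WithLp.equiv 2 (Fin N → ℝ)) (hBsym.eigenvectorBasis pp) with hvvdef
  have hBv : ∀ pp m, ∑ jj, B m jj * vv pp jj = lam pp * vv pp m := by
    intro pp m
    have h := congrFun (hBsym.mulVec_eigenvectorBasis pp) m
    simpa [Matrix.mulVec, dotProduct, hvvdef] using h
  have hBsymE : ∀ m jj : Fin N, B jj m = B m jj := by
    intro m jj
    simp only [hBdef, Matrix.of_apply]
    rw [hLsymm m jj]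
    ring
  have hlam0 : ∀ pp, 0 ≤ lam pp := fun pp => hBpsd.eigenvalues_nonneg pp
  have hvunit : ∀ pp, ∑ m, vv pp m * vv pp m = 1 := by
    intro pp
    have h := hBsym.eigenvectorBasis.orthonormal.1 pp
    rw [EuclideanSpace.norm_eq] at h
    have h2 := Real.sqrt_eq_one.mp h
    calc ∑ m, vv pp m * vv pp m = ∑ m, ‖hBsym.eigenvectorBasis pp m‖^2 := by
          apply Finset.sum_congr rfl
          intro m _
          simp only [hvvdef, WithLp.equiv_apply, Real.norm_eq_abs, sq_abs]
          ring
    _ = 1 := h2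
  have hvle1 : ∀ pp m, |vv pp m| ≤ 1 := by
    intro pp m
    have h := hvunit pp
    have hterm : vv pp m * vv pp m ≤ 1 := by
      have hle : vv pp m * vv pp m ≤ ∑ m', vv pp m' * vv pp m' :=
        Finset.single_le_sum (f := fun m' => vv pp m' * vv pp m')
          (fun i' _ => mul_self_nonneg _) (Finset.mem_univ m)
      linarith
    nlinarith [sq_nonneg (|vv pp m| - 1), abs_nonneg (vv pp m), sq_abs (vv pp m)]
  have hLe : ∀ m jj, |L m jj| ≤ (N:ℝ) := by
    intro m jj
    have h1 : (0:ℝ) ≤ (G.degree m : ℝ) := by positivity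
    simp only [hLdef, SimpleGraph.lapMatrix, Matrix.sub_apply, SimpleGraph.degMatrix,
      SimpleGraph.adjMatrix_apply, Matrix.diagonal_apply]
    split_ifs <;> rw [abs_le] <;> constructor <;> nlinarith [hdN m, hd1 m]
  have hBe : ∀ m jj, |B m jj| ≤ (N:ℝ) := by
    intro m jj
    simp only [hBdef, Matrix.of_apply]
    rw [abs_mul, abs_mul]
    have h1 : |(sq m)⁻¹| ≤ 1 := by
      rw [abs_of_pos (inv_pos.mpr (hsq0 m))]
      exact inv_le_one_of_one_le₀ (hsq1 m)
    have h3 : |(sq jj)⁻¹| ≤ 1 := by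
      rw [abs_of_pos (inv_pos.mpr (hsq0 jj))]
      exact inv_le_one_of_one_le₀ (hsq1 jj)
    have h2 := hLe m jj
    have h4 : |(sq m)⁻¹| * |L m jj| ≤ 1 * (N:ℝ) :=
      mul_le_mul h1 h2 (abs_nonneg _) one_pos.le
    have h5 : |(sq m)⁻¹| * |L m jj| * |(sq jj)⁻¹| ≤ (1 * (N:ℝ)) * 1 :=
      mul_le_mul h4 h3 (abs_nonneg _) (by positivity)
    linarith
  have hlamN : ∀ pp, lam pp ≤ (N:ℝ)^3 := by
    intro pp
    have h1 : lam pp = ∑ m, vv pp m * (∑ jj, B m jj * vv pp jj) := by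
      calc lam pp = lam pp * 1 := by ring
      _ = lam pp * ∑ m, vv pp m * vv pp m := by rw [hvunit pp]
      _ = ∑ m, lam pp * (vv pp m * vv pp m) := by rw [Finset.mul_sum]
      _ = ∑ m, vv pp m * (∑ jj, B m jj * vv pp jj) := by
          apply Finset.sum_congr rfl
          intro m _
          rw [hBv pp m]
          ring
    have hterm : ∀ m, |vv pp m * (∑ jj, B m jj * vv pp jj)| ≤ (N:ℝ)^2 := by
      intro m
      rw [abs_mul]
      have hinner : |∑ jj, B m jj * vv pp jj| ≤ (N:ℝ) * (N:ℝ) := by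
        calc |∑ jj, B m jj * vv pp jj| ≤ ∑ jj, |B m jj * vv pp jj| :=
            Finset.abs_sum_le_sum_abs _ _
        _ ≤ ∑ _jj : Fin N, (N:ℝ) := by
            apply Finset.sum_le_sum
            intro jj _
            rw [abs_mul]
            have t1 := hBe m jj
            have t2 := hvle1 pp jj
            nlinarith [abs_nonneg (B m jj), abs_nonneg (vv pp jj)]
        _ = (N:ℝ) * (N:ℝ) := by
            rw [Finset.sum_const, Finset.card_univ, Fintype.card_fin, nsmul_eq_mul]
      have t3 := hvle1 pp m
      nlinarith [abs_nonneg (vv pp m), abs_nonneg (∑ jj, B m jj * vv pp jj)]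
    calc lam pp = ∑ m, vv pp m * (∑ jj, B m jj * vv pp jj) := h1
    _ ≤ |∑ m, vv pp m * (∑ jj, B m jj * vv pp jj)| := le_abs_self _
    _ ≤ ∑ m, |vv pp m * (∑ jj, B m jj * vv pp jj)| := Finset.abs_sum_le_sum_abs _ _
    _ ≤ ∑ _m : Fin N, (N:ℝ)^2 := Finset.sum_le_sum (fun m _ => hterm m)
    _ = (N:ℝ)^3 := by
        rw [Finset.sum_const, Finset.card_univ, Fintype.card_fin, nsmul_eq_mul]
        ring
  have hφb : ∀ pp (ξ : Fin N → ℝ), |∑ m, vv pp m * (sq m * ξ m)| ≤ (N:ℝ)^2 * ‖ξ‖ := by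
    intro pp ξ
    calc |∑ m, vv pp m * (sq m * ξ m)| ≤ ∑ m, |vv pp m * (sq m * ξ m)| :=
        Finset.abs_sum_le_sum_abs _ _
    _ ≤ ∑ _m : Fin N, (N:ℝ) * ‖ξ‖ := by
        apply Finset.sum_le_sum
        intro m _
        rw [abs_mul, abs_mul]
        have e1 := hvle1 pp m
        have e2 : |sq m| ≤ (N:ℝ) := by
          rw [abs_of_pos (hsq0 m)]
          exact hsqN m
        have e3 : |ξ m| ≤ ‖ξ‖ := by
          have hn := norm_le_pi_norm ξ m
          rwa [Real.norm_eq_abs] at hn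
        have e4 : |sq m| * |ξ m| ≤ (N:ℝ) * ‖ξ‖ :=
          mul_le_mul e2 e3 (abs_nonneg _) (by positivity)
        calc |vv pp m| * (|sq m| * |ξ m|) ≤ 1 * ((N:ℝ) * ‖ξ‖) :=
            mul_le_mul e1 e4 (mul_nonneg (abs_nonneg _) (abs_nonneg _)) one_pos.le
        _ = (N:ℝ) * ‖ξ‖ := one_mul _
    _ = (N:ℝ)^2 * ‖ξ‖ := by
        rw [Finset.sum_const, Finset.card_univ, Fintype.card_fin, nsmul_eq_mul]
        ring
  have hkeyM : ∀ pp (ξ : Fin N → ℝ),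
      (∑ m, vv pp m * (sq m * ((((Matrix.diagonal fun i' => ((G.degree i' : ℝ))⁻¹) *
        L)) *ᵥ ξ) m))
      = lam pp * ∑ m, vv pp m * (sq m * ξ m) := by
    intro pp ξ
    have hrow : ∀ m, sq m * ((((Matrix.diagonal fun i' => ((G.degree i' : ℝ))⁻¹) *
        L)) *ᵥ ξ) m = ∑ jj, B m jj * (sq jj * ξ jj) := by
      intro m
      have hmv : ((((Matrix.diagonal fun i' => ((G.degree i' : ℝ))⁻¹) * L)) *ᵥ ξ) m
          = ∑ jj, ((G.degree m : ℝ))⁻¹ * L m jj * ξ jj := by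
        simp only [Matrix.mulVec, dotProduct]
        apply Finset.sum_congr rfl
        intro jj _
        rw [Matrix.diagonal_mul]
      rw [hmv, Finset.mul_sum]
      apply Finset.sum_congr rfl
      intro jj _
      have e : ((G.degree m : ℝ))⁻¹ = (sq m)⁻¹ * (sq m)⁻¹ := by
        rw [← hss m, mul_inv]
      rw [e]
      simp only [hBdef, Matrix.of_apply]
      have hm := hsqne m
      have hj := hsqne jj
      field_simp
    calc (∑ m, vv pp m * (sq m * ((((Matrix.diagonal fun i' => ((G.degree i' : ℝ))⁻¹) *
          L)) *ᵥ ξ) m))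
        = ∑ m, vv pp m * ∑ jj, B m jj * (sq jj * ξ jj) := by
          apply Finset.sum_congr rfl
          intro m _
          rw [hrow m]
    _ = ∑ m, ∑ jj, vv pp m * (B m jj * (sq jj * ξ jj)) := by
          apply Finset.sum_congr rfl
          intro m _
          rw [Finset.mul_sum]
    _ = ∑ jj, ∑ m, vv pp m * (B m jj * (sq jj * ξ jj)) := Finset.sum_comm
    _ = ∑ jj, (∑ m, B jj m * vv pp m) * (sq jj * ξ jj) := by
          apply Finset.sum_congr rfl
          intro jj _
          rw [Finset.sum_mul]
          apply Finset.sum_congr rfl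
          intro m _
          rw [hBsymE m jj]
          ring
    _ = ∑ jj, (lam pp * vv pp jj) * (sq jj * ξ jj) := by
          apply Finset.sum_congr rfl
          intro jj _
          rw [hBv pp jj]
    _ = lam pp * ∑ jj, vv pp jj * (sq jj * ξ jj) := by
          rw [Finset.mul_sum]
          apply Finset.sum_congr rfl
          intro jj _
          ring
  have hexpand : ∀ (ξ : Fin N → ℝ) (m : Fin N),
      ξ m = (sq m)⁻¹ * ∑ pp, (∑ m', vv pp m' * (sq m' * ξ m')) * vv pp m := by
    intro ξ m
    set η : EuclideanSpace ℝ (Fin N) := (WithLp.equiv 2 (Fin N → ℝ)).symm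
      (fun m' => sq m' * ξ m') with hηdef
    have hrepr : ∀ pp, hBsym.eigenvectorBasis.repr η pp = ∑ m', vv pp m' * (sq m' * ξ m') := by
      intro pp
      rw [hBsym.eigenvectorBasis.repr_apply_apply, PiLp.inner_apply]
      apply Finset.sum_congr rfl
      intro m' _
      simp [RCLike.inner_apply, hηdef, hvvdef]
      ring
    have hsum := hBsym.eigenvectorBasis.sum_repr η
    have happ := congrFun (congrArg (WithLp.equiv 2 (Fin N → ℝ)) hsum) m
    have hLHS : (WithLp.equiv 2 (Fin N → ℝ))
        (∑ pp, hBsym.eigenvectorBasis.repr η pp • hBsym.eigenvectorBasis pp) m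
        = ∑ pp, (∑ m', vv pp m' * (sq m' * ξ m')) * vv pp m := by
      rw [show ((WithLp.equiv 2 (Fin N → ℝ))
          (∑ pp, hBsym.eigenvectorBasis.repr η pp • hBsym.eigenvectorBasis pp) m)
          = (∑ pp, hBsym.eigenvectorBasis.repr η pp • hBsym.eigenvectorBasis pp) m from rfl]
      rw [show ((∑ pp, hBsym.eigenvectorBasis.repr η pp • hBsym.eigenvectorBasis pp) m)
          = ∑ pp, (hBsym.eigenvectorBasis.repr η pp • hBsym.eigenvectorBasis pp) m from by
        rw [WithLp.ofLp_sum, Finset.sum_apply]]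
      apply Finset.sum_congr rfl
      intro pp _
      rw [hrepr pp]
      rfl
    have hRHS : (WithLp.equiv 2 (Fin N → ℝ)) η m = sq m * ξ m := by
      rw [hηdef]
      rfl
    rw [hLHS, hRHS] at happ
    have hne := hsqne m
    rw [happ]
    field_simp
  have hzerodiff : ∀ pp : Fin N, 0 = lam pp → ∀ i' j' : Fin N,
      (sq i')⁻¹ * vv pp i' - (sq j')⁻¹ * vv pp j' = 0 := by
    intro pp hzero i' j'
    have hval : ∀ m'', ∑ jj, L m'' jj * ((sq jj)⁻¹ * vv pp jj) = 0 := by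
      intro m''
      have e : ∀ jj, L m'' jj * ((sq jj)⁻¹ * vv pp jj) = sq m'' * (B m'' jj * vv pp jj) := by
        intro jj
        simp only [hBdef, Matrix.of_apply]
        have hm := hsqne m''
        have hj := hsqne jj
        field_simp
      rw [Finset.sum_congr rfl (fun jj _ => e jj), ← Finset.mul_sum, hBv pp m'', ← hzero]
      simp
    have hLw : G.lapMatrix ℝ *ᵥ (fun m' => (sq m')⁻¹ * vv pp m') = 0 := by
      funext m'
      exact hval m'
    have hzeroLin : Matrix.toLin' (G.lapMatrix ℝ) (fun m' => (sq m')⁻¹ * vv pp m') = 0 := by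
      rw [Matrix.toLin'_apply]
      exact hLw
    have hreach := (G.lapMatrix_mulVec_eq_zero_iff_forall_reachable).mp hLw i' j' (hG.preconnected i' j')
    rw [hreach]
    ring
  clear_value vv lam B
  -- choice of h0
  refine ⟨min (Real.sqrt (4*w2/(w1*(N:ℝ)^3))) (Real.sqrt (Real.sqrt (4*w3/w1))),
    lt_min (Real.sqrt_pos.mpr (div_pos (by linarith) (mul_pos hw1 (pow_pos hNpos 3))))
      (Real.sqrt_pos.mpr (Real.sqrt_pos.mpr (div_pos (by linarith) hw1))), ?_⟩
  intro h hh0 hlt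
  have hh2 : h^2 < 4*w2/(w1*(N:ℝ)^3) :=
    (Real.lt_sqrt hh0.le).mp (lt_of_lt_of_le hlt (min_le_left _ _))
  have hh2' : w1*(N:ℝ)^3*h^2 < 4*w2 := by
    rw [lt_div_iff₀ (mul_pos hw1 (pow_pos hNpos 3))] at hh2
    linarith
  have hh4 : h^4 < 4*w3/w1 := by
    have s1 : h^2 < Real.sqrt (4*w3/w1) :=
      (Real.lt_sqrt hh0.le).mp (lt_of_lt_of_le hlt (min_le_right _ _))
    have s2 : (h^2)^2 < 4*w3/w1 := (Real.lt_sqrt (by positivity)).mp s1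
    calc h^4 = (h^2)^2 := by ring
    _ < _ := s2
  have hh4' : w1*h^4 < 4*w3 := by
    rw [lt_div_iff₀ hw1] at hh4
    linarith
  set a := ah w1 w2 w3 h with hadef
  set b := bh w1 w2 w3 h with hbdef
  have hapos : 0 < a := by rw [hadef, ah, Sh]; positivity
  have hbpos : 0 < b := by rw [hbdef, bh, Sh]; positivity
  have hS' : (0:ℝ) < w3 + w2*h^2 + w1*h^4/4 := by positivity
  have hba : h*b < 1 := by
    rw [hbdef, bh, Sh]
    rw [show h * ((w2*h + w1*h^3/2)/(w3 + w2*h^2 + w1*h^4/4))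
      = (h*(w2*h + w1*h^3/2))/(w3 + w2*h^2 + w1*h^4/4) from by ring]
    rw [div_lt_one hS']
    nlinarith
  have hkey : ∀ lamv : ℝ, 0 ≤ lamv → lamv ≤ (N:ℝ)^3 → h^2/2*(a*lamv) < h*b := by
    intro lamv hl0 hlN
    rw [hadef, hbdef, ah, bh, Sh]
    have e1 : h^2/2*((w1*h^2/(2*(w3 + w2*h^2 + w1*h^4/4)))*lamv)
        = (w1*h^4*lamv/4)/(w3 + w2*h^2 + w1*h^4/4) := by
      field_simp
      ring
    have e2 : h*((w2*h + w1*h^3/2)/(w3 + w2*h^2 + w1*h^4/4))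
        = (w2*h^2 + w1*h^4/2)/(w3 + w2*h^2 + w1*h^4/4) := by
      field_simp
    rw [e1, e2, div_lt_div_iff₀ hS' hS']
    apply mul_lt_mul_of_pos_right ?_ hS'
    have f1 : w1*h^4*lamv/4 ≤ w1*h^4*((N:ℝ)^3)/4 := by
      have := mul_le_mul_of_nonneg_right hlN (show (0:ℝ) ≤ w1*h^4/4 by positivity)
      linarith
    have f2 : w1*(N:ℝ)^3*h^2*(h^2/4) < 4*w2*(h^2/4) :=
      mul_lt_mul_of_pos_right hh2' (by positivity)
    have f3 : (0:ℝ) < w1*h^4/2 := by positivity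
    nlinarith
  have modeC : ∀ pp : Fin N, ∃ C1 C2 : ℝ, 0 < C1 ∧ 0 < C2 ∧
      (0 < lam pp → ∀ x y g1 g2 : ℕ → ℝ, ∀ Γ : ℝ, 0 ≤ Γ →
        (∀ k, 1 ≤ k → |g1 k| ≤ Γ) → (∀ k, 1 ≤ k → |g2 k| ≤ Γ) →
        (∀ k, x (k+1) = (1 - h^2/2*(a*lam pp)) * x k + (h - h^2/2*b) * y k + g1 (k+1)) →
        (∀ k, y (k+1) = (-(h*(a*lam pp))) * x k + (1 - h*b) * y k + g2 (k+1)) →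
        ∀ k, |x k| ≤ C1 * max |x 0| |y 0| + C2 * Γ) := by
    intro pp
    by_cases hpos : 0 < lam pp
    · have hc := hkey (lam pp) (hlam0 pp) (hlamN pp)
      have hcpos : 0 < h^2/2*(a*lam pp) :=
        mul_pos (by positivity) (mul_pos hapos hpos)
      have j1 : (1 - h^2/2*(a*lam pp)) * (1 - h*b) - (h - h^2/2*b) * (-(h*(a*lam pp))) < 1 := by
        nlinarith [hc, hcpos]
      have j2 : -1 < (1 - h^2/2*(a*lam pp)) * (1 - h*b) - (h - h^2/2*b) * (-(h*(a*lam pp))) := by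
        nlinarith [hc, hcpos, hba]
      have j3 : (1 - h^2/2*(a*lam pp)) + (1 - h*b) <
          1 + ((1 - h^2/2*(a*lam pp)) * (1 - h*b) - (h - h^2/2*b) * (-(h*(a*lam pp)))) := by
        nlinarith [hcpos]
      have j4 : -(1 + ((1 - h^2/2*(a*lam pp)) * (1 - h*b) - (h - h^2/2*b) * (-(h*(a*lam pp)))))
          < (1 - h^2/2*(a*lam pp)) + (1 - h*b) := by
        nlinarith [hcpos, hba]
      obtain ⟨C1, hC1, C2, hC2, hbd⟩ := iss_bound (1 - h^2/2*(a*lam pp)) (h - h^2/2*b)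
        (-(h*(a*lam pp))) (1 - h*b) j1 j2 j3 j4
      exact ⟨C1, C2, hC1, hC2, fun _ => hbd⟩
    · exact ⟨1, 1, one_pos, one_pos, fun hcon => absurd hcon hpos⟩
  choose CC1 CC2 hCC1 hCC2 hCC using modeC
  set Cα := (1 + h^2/2*a + h*a) * (N:ℝ)^2 with hCadef
  have hCα : 0 < Cα := by
    apply mul_pos _ (by positivity)
    have t1 : 0 < h*a := mul_pos hh0 hapos
    have t2 : 0 ≤ h^2/2*a := mul_nonneg (by positivity) hapos.le
    linarith
  refine ⟨2*(N:ℝ)^2 * ∑ pp, CC1 pp, ?_, 2*Cα * ∑ pp, CC2 pp, ?_, ?_⟩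
  · exact mul_pos (by positivity) (Finset.sum_pos (fun pp _ => hCC1 pp) Finset.univ_nonempty)
  · exact mul_pos (mul_pos (by norm_num) hCα) (Finset.sum_pos (fun pp _ => hCC2 pp)
      Finset.univ_nonempty)
  intro Δ Δdot U α hα hrec l hl i j
  have hMnn : 0 ≤ max ‖Δ 0‖ ‖Δdot 0‖ := le_trans (norm_nonneg _) (le_max_left _ _)
  have hrecs : ∀ pp k,
      ((∑ m, vv pp m * (sq m * Δ (k+1) m)) =
        (1 - h^2/2*(a*lam pp)) * (∑ m, vv pp m * (sq m * Δ k m)) +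
        (h - h^2/2*b) * (∑ m, vv pp m * (sq m * Δdot k m)) +
        (h^2/2*a - 1) * (∑ m, vv pp m * (sq m * α (k+1) m)))
      ∧ ((∑ m, vv pp m * (sq m * Δdot (k+1) m)) =
        (-(h*(a*lam pp))) * (∑ m, vv pp m * (sq m * Δ k m)) +
        (1 - h*b) * (∑ m, vv pp m * (sq m * Δdot k m)) +
        h*a * (∑ m, vv pp m * (sq m * α (k+1) m))) := by
    intro pp k
    obtain ⟨hU, hΔ, hΔd⟩ := hrec (k+1) (by omega)
    rw [Nat.add_sub_cancel] at hU hΔ hΔd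
    have hUm : ∀ m, U (k+1) m =
        -(a * ((((Matrix.diagonal fun i' => ((G.degree i' : ℝ))⁻¹) * L)) *ᵥ Δ k) m)
        - b * Δdot k m + a * α (k+1) m := by
      intro m
      have hcf := congrFun hU m
      simpa [Pi.add_apply, Pi.sub_apply, Pi.neg_apply, Pi.smul_apply, smul_eq_mul] using hcf
    have hΔm : ∀ m, Δ (k+1) m = Δ k m - α (k+1) m + h * Δdot k m + (h^2/2) * U (k+1) m := by
      intro m
      have hcf := congrFun hΔ m
      simpa [Pi.add_apply, Pi.sub_apply, Pi.smul_apply, smul_eq_mul] using hcf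
    have hΔdm : ∀ m, Δdot (k+1) m = Δdot k m + h * U (k+1) m := by
      intro m
      have hcf := congrFun hΔd m
      simpa [Pi.add_apply, Pi.smul_apply, smul_eq_mul] using hcf
    constructor
    · calc (∑ m, vv pp m * (sq m * Δ (k+1) m))
          = ∑ m, (vv pp m * (sq m * Δ k m) +
            (h - h^2/2*b) * (vv pp m * (sq m * Δdot k m)) +
            (h^2/2*a - 1) * (vv pp m * (sq m * α (k+1) m)) -
            (h^2/2*a) * (vv pp m * (sq m * ((((Matrix.diagonal fun i' =>
              ((G.degree i' : ℝ))⁻¹) * L)) *ᵥ Δ k) m))) := by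
            apply Finset.sum_congr rfl
            intro m _
            rw [hΔm m, hUm m]
            ring
      _ = (∑ m, vv pp m * (sq m * Δ k m)) +
            (h - h^2/2*b) * (∑ m, vv pp m * (sq m * Δdot k m)) +
            (h^2/2*a - 1) * (∑ m, vv pp m * (sq m * α (k+1) m)) -
            (h^2/2*a) * (∑ m, vv pp m * (sq m * ((((Matrix.diagonal fun i' =>
              ((G.degree i' : ℝ))⁻¹) * L)) *ᵥ Δ k) m)) := by
            simp only [Finset.sum_sub_distrib, Finset.sum_add_distrib, ← Finset.mul_sum]
      _ = (1 - h^2/2*(a*lam pp)) * (∑ m, vv pp m * (sq m * Δ k m)) +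
            (h - h^2/2*b) * (∑ m, vv pp m * (sq m * Δdot k m)) +
            (h^2/2*a - 1) * (∑ m, vv pp m * (sq m * α (k+1) m)) := by
            rw [hkeyM pp (Δ k)]
            ring
    · calc (∑ m, vv pp m * (sq m * Δdot (k+1) m))
          = ∑ m, (vv pp m * (sq m * Δdot k m) +
            (h*a) * (vv pp m * (sq m * α (k+1) m)) -
            (h*b) * (vv pp m * (sq m * Δdot k m)) -
            (h*a) * (vv pp m * (sq m * ((((Matrix.diagonal fun i' =>
              ((G.degree i' : ℝ))⁻¹) * L)) *ᵥ Δ k) m))) := by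
            apply Finset.sum_congr rfl
            intro m _
            rw [hΔdm m, hUm m]
            ring
      _ = (∑ m, vv pp m * (sq m * Δdot k m)) +
            (h*a) * (∑ m, vv pp m * (sq m * α (k+1) m)) -
            (h*b) * (∑ m, vv pp m * (sq m * Δdot k m)) -
            (h*a) * (∑ m, vv pp m * (sq m * ((((Matrix.diagonal fun i' =>
              ((G.degree i' : ℝ))⁻¹) * L)) *ᵥ Δ k) m)) := by
            simp only [Finset.sum_sub_distrib, Finset.sum_add_distrib, ← Finset.mul_sum]
      _ = (-(h*(a*lam pp))) * (∑ m, vv pp m * (sq m * Δ k m)) +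
            (1 - h*b) * (∑ m, vv pp m * (sq m * Δdot k m)) +
            h*a * (∑ m, vv pp m * (sq m * α (k+1) m)) := by
            rw [hkeyM pp (Δ k)]
            ring
  have hmode : ∀ pp, 0 < lam pp → ∀ k, |∑ m, vv pp m * (sq m * Δ k m)| ≤
      CC1 pp * ((N:ℝ)^2 * max ‖Δ 0‖ ‖Δdot 0‖) + CC2 pp * (Cα * d) := by
    intro pp hpos k
    have halled : ∀ k', 1 ≤ k' → ‖α k'‖ ≤ d := by
      intro k' hk'
      have h1 := hα k' hk'
      have hexp : Real.exp (-ν * k' * h) ≤ 1 := by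
        have hle : (-ν * k' * h) ≤ 0 := by
          have : 0 ≤ ν * k' * h := by positivity
          linarith
        calc Real.exp (-ν * k' * h) ≤ Real.exp 0 := Real.exp_le_exp.mpr hle
        _ = 1 := Real.exp_zero
      nlinarith [Real.exp_pos (-ν * k' * h)]
    have hg1 : ∀ k', 1 ≤ k' → |(h^2/2*a - 1) * (∑ m, vv pp m * (sq m * α k' m))| ≤ Cα * d := by
      intro k' hk'
      rw [abs_mul]
      have e4 : |∑ m, vv pp m * (sq m * α k' m)| ≤ (N:ℝ)^2 * d := by
        calc _ ≤ (N:ℝ)^2*‖α k'‖ := hφb pp (α k')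
        _ ≤ (N:ℝ)^2 * d := mul_le_mul_of_nonneg_left (halled k' hk') (by positivity)
      have e3 : |h^2/2*a - 1| ≤ 1 + h^2/2*a := by
        rw [abs_le]
        constructor <;> nlinarith [mul_nonneg (show (0:ℝ) ≤ h^2/2 by positivity) hapos.le]
      have e5 : |h^2/2*a - 1| * |∑ m, vv pp m * (sq m * α k' m)| ≤
          (1 + h^2/2*a) * ((N:ℝ)^2 * d) := by
        apply mul_le_mul e3 e4 (abs_nonneg _)
        nlinarith [mul_nonneg (show (0:ℝ) ≤ h^2/2 by positivity) hapos.le]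
      have e6 : 0 ≤ h*a*((N:ℝ)^2*d) :=
        mul_nonneg (mul_pos hh0 hapos).le (mul_nonneg (by positivity) hd.le)
      rw [hCadef]
      nlinarith [e5, e6]
    have hg2 : ∀ k', 1 ≤ k' → |h*a * (∑ m, vv pp m * (sq m * α k' m))| ≤ Cα * d := by
      intro k' hk'
      rw [abs_mul]
      have e4 : |∑ m, vv pp m * (sq m * α k' m)| ≤ (N:ℝ)^2 * d := by
        calc _ ≤ (N:ℝ)^2*‖α k'‖ := hφb pp (α k')
        _ ≤ (N:ℝ)^2 * d := mul_le_mul_of_nonneg_left (halled k' hk') (by positivity)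
      have e3 : |h*a| = h*a := abs_of_pos (mul_pos hh0 hapos)
      have e5 : |h*a| * |∑ m, vv pp m * (sq m * α k' m)| ≤ (h*a) * ((N:ℝ)^2 * d) := by
        rw [e3]
        apply mul_le_mul_of_nonneg_left e4 (mul_pos hh0 hapos).le
      have e6 : 0 ≤ (1 + h^2/2*a)*((N:ℝ)^2*d) := by
        apply mul_nonneg _ (mul_nonneg (by positivity) hd.le)
        nlinarith [mul_nonneg (show (0:ℝ) ≤ h^2/2 by positivity) hapos.le]
      rw [hCadef]
      nlinarith [e5, e6]
    have happ := hCC pp hpos (fun k' => ∑ m, vv pp m * (sq m * Δ k' m))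
      (fun k' => ∑ m, vv pp m * (sq m * Δdot k' m))
      (fun k' => (h^2/2*a - 1) * (∑ m, vv pp m * (sq m * α k' m)))
      (fun k' => h*a * (∑ m, vv pp m * (sq m * α k' m)))
      (Cα * d) (mul_nonneg hCα.le hd.le) hg1 hg2
      (fun k' => (hrecs pp k').1) (fun k' => (hrecs pp k').2) k
    have hmax : max |∑ m, vv pp m * (sq m * Δ 0 m)| |∑ m, vv pp m * (sq m * Δdot 0 m)|
        ≤ (N:ℝ)^2 * max ‖Δ 0‖ ‖Δdot 0‖ := by
      apply max_le
      · exact le_trans (hφb pp (Δ 0)) (mul_le_mul_of_nonneg_left (le_max_left _ _)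
          (by positivity))
      · exact le_trans (hφb pp (Δdot 0)) (mul_le_mul_of_nonneg_left (le_max_right _ _)
          (by positivity))
    have hmono := mul_le_mul_of_nonneg_left hmax (hCC1 pp).le
    linarith
  have hdiff : Δ l i - Δ l j = ∑ pp, (∑ m', vv pp m' * (sq m' * Δ l m')) *
      ((sq i)⁻¹ * vv pp i - (sq j)⁻¹ * vv pp j) := by
    calc Δ l i - Δ l j
        = (sq i)⁻¹ * (∑ pp, (∑ m', vv pp m' * (sq m' * Δ l m')) * vv pp i) -
          (sq j)⁻¹ * (∑ pp, (∑ m', vv pp m' * (sq m' * Δ l m')) * vv pp j) := by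
          rw [← hexpand (Δ l) i, ← hexpand (Δ l) j]
    _ = ∑ pp, (∑ m', vv pp m' * (sq m' * Δ l m')) *
          ((sq i)⁻¹ * vv pp i - (sq j)⁻¹ * vv pp j) := by
          rw [Finset.mul_sum, Finset.mul_sum, ← Finset.sum_sub_distrib]
          apply Finset.sum_congr rfl
          intro pp _
          ring
  have hterm : ∀ pp, |(∑ m', vv pp m' * (sq m' * Δ l m')) *
      ((sq i)⁻¹ * vv pp i - (sq j)⁻¹ * vv pp j)| ≤
      2 * (CC1 pp * ((N:ℝ)^2 * max ‖Δ 0‖ ‖Δdot 0‖) + CC2 pp * (Cα * d)) := by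
    intro pp
    have hnn : 0 ≤ CC1 pp * ((N:ℝ)^2 * max ‖Δ 0‖ ‖Δdot 0‖) + CC2 pp * (Cα * d) := by
      have t1 := mul_nonneg (hCC1 pp).le (mul_nonneg (by positivity : (0:ℝ) ≤ (N:ℝ)^2) hMnn)
      have t2 := mul_nonneg (hCC2 pp).le (mul_nonneg hCα.le hd.le)
      linarith
    rcases (hlam0 pp).lt_or_eq with hpos | hzero
    · rw [abs_mul]
      have h1 := hmode pp hpos l
      have h2 : |(sq i)⁻¹ * vv pp i - (sq j)⁻¹ * vv pp j| ≤ 2 := by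
        have e1 : |(sq i)⁻¹ * vv pp i| ≤ 1 := by
          rw [abs_mul, abs_of_pos (inv_pos.mpr (hsq0 i))]
          have t1 : (sq i)⁻¹ ≤ 1 := inv_le_one_of_one_le₀ (hsq1 i)
          have t2 := hvle1 pp i
          nlinarith [abs_nonneg (vv pp i), inv_pos.mpr (hsq0 i)]
        have e2 : |(sq j)⁻¹ * vv pp j| ≤ 1 := by
          rw [abs_mul, abs_of_pos (inv_pos.mpr (hsq0 j))]
          have t1 : (sq j)⁻¹ ≤ 1 := inv_le_one_of_one_le₀ (hsq1 j)
          have t2 := hvle1 pp j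
          nlinarith [abs_nonneg (vv pp j), inv_pos.mpr (hsq0 j)]
        have e3 := abs_sub ((sq i)⁻¹ * vv pp i) ((sq j)⁻¹ * vv pp j)
        linarith
      calc |∑ m', vv pp m' * (sq m' * Δ l m')| * |(sq i)⁻¹ * vv pp i - (sq j)⁻¹ * vv pp j|
          ≤ (CC1 pp * ((N:ℝ)^2 * max ‖Δ 0‖ ‖Δdot 0‖) + CC2 pp * (Cα * d)) * 2 :=
            mul_le_mul h1 h2 (abs_nonneg _) hnn
      _ = 2 * (CC1 pp * ((N:ℝ)^2 * max ‖Δ 0‖ ‖Δdot 0‖) + CC2 pp * (Cα * d)) := by ring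
    · rw [hzerodiff pp hzero i j, mul_zero, abs_zero]
      linarith
  calc |Δ l i - Δ l j|
      = |∑ pp, (∑ m', vv pp m' * (sq m' * Δ l m')) *
          ((sq i)⁻¹ * vv pp i - (sq j)⁻¹ * vv pp j)| := by rw [hdiff]
  _ ≤ ∑ pp, |(∑ m', vv pp m' * (sq m' * Δ l m')) *
        ((sq i)⁻¹ * vv pp i - (sq j)⁻¹ * vv pp j)| := Finset.abs_sum_le_sum_abs _ _
  _ ≤ ∑ pp, 2 * (CC1 pp * ((N:ℝ)^2 * max ‖Δ 0‖ ‖Δdot 0‖) + CC2 pp * (Cα * d)) :=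
      Finset.sum_le_sum (fun pp _ => hterm pp)
  _ = (2*(N:ℝ)^2 * ∑ pp, CC1 pp) * max ‖Δ 0‖ ‖Δdot 0‖ + (2*Cα * ∑ pp, CC2 pp) * d := by
      rw [Finset.sum_congr rfl (fun pp _ =>
        show (2:ℝ) * (CC1 pp * ((N:ℝ)^2 * max ‖Δ 0‖ ‖Δdot 0‖) + CC2 pp * (Cα * d))
          = CC1 pp * (2*(N:ℝ)^2 * max ‖Δ 0‖ ‖Δdot 0‖) + CC2 pp * (2*Cα*d) from by ring)]
      rw [Finset.sum_add_distrib, ← Finset.sum_mul, ← Finset.sum_mul]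
      ring
end
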